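/- Fix 0 < h < 2 and define the symplectic Euler iterates for the harmonic oscillator by x_{n+1} = x_n + h p_n and p_{n+1} = p_n − h x_{n+1}, starting from (x₀, p₀) ∈ ℝ². Then for every n ∈ ℕ, the energy E_n = (x_n² + p_n²)/2 satisfies the two-sided bound ((2 − h)/(2 + h)) E₀ ≤ E_n ≤ ((2 + h)/(2 − h)) E₀, where E₀ = (x₀² + p₀²)/2. In particular, the energy along the symplectic Euler trajectory remains bounded above and below for all n. -/
import Mathlib

/-- For the symplectic Euler discretisation of the harmonic oscillator with step size
`0 < h < 2`, the energy `Eₙ = (xₙ² + pₙ²)/2` satisfies the two-sided bound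
`((2-h)/(2+h)) E₀ ≤ Eₙ ≤ ((2+h)/(2-h)) E₀`. -/
theorem symplectic_euler_energy_bounds
    (h : ℝ) (hh0 : 0 < h) (hh2 : h < 2) (x p : ℕ → ℝ)
    (hx : ∀ n : ℕ, x (n + 1) = x n + h * p n)
    (hp : ∀ n : ℕ, p (n + 1) = p n - h * x (n + 1)) :
    ∀ n : ℕ,
      (2 - h) / (2 + h) * (((x 0) ^ 2 + (p 0) ^ 2) / 2)
          ≤ ((x n) ^ 2 + (p n) ^ 2) / 2 ∧
      ((x n) ^ 2 + (p n) ^ 2) / 2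
          ≤ (2 + h) / (2 - h) * (((x 0) ^ 2 + (p 0) ^ 2) / 2) := by
  have hQ : ∀ n : ℕ, (x n) ^ 2 + (p n) ^ 2 + h * x n * p n
      = (x 0) ^ 2 + (p 0) ^ 2 + h * x 0 * p 0 := by
    intro n
    induction n with
    | zero => rfl
    | succ k ih =>
      rw [hp k, hx k]
      nlinarith [ih, sq_nonneg (x k), sq_nonneg (p k)]
  intro n
  have hQn := hQ n
  have h2p : (0:ℝ) < 2 + h := by linarith
  have h2m : (0:ℝ) < 2 - h := by linarith
  constructor
  · rw [div_mul_eq_mul_div, div_le_iff₀ h2p]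
    nlinarith [sq_nonneg (x n + p n), sq_nonneg (x n - p n),
      sq_nonneg (x 0 + p 0), sq_nonneg (x 0 - p 0), hh0.le]
  · rw [div_mul_eq_mul_div, le_div_iff₀ h2m]
    nlinarith [sq_nonneg (x n + p n), sq_nonneg (x n - p n),
      sq_nonneg (x 0 + p 0), sq_nonneg (x 0 - p 0), hh0.le]
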